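/- arXiv:quant-ph/0310109 — 5 statements merged into one kernel-verified Lean document; each statement's English description precedes it below -/
import Mathlib

section
/- If C1 and C2 are convex cones in a finite-dimensional real vector space and F is a face of the convex hull cone conv(C1, C2), then F ∩ C1 is a face of C1 and F ∩ C2 is a face of C2, and F = conv(F ∩ C1, F ∩ C2). -/
/-- A convex cone: contains 0, closed under nonnegative scalar multiplication and addition. -/
def IsConvexCone {E : Type*} [AddCommMonoid E] [SMul ℝ E] (C : Set E) : Prop :=
  0 ∈ C ∧ (∀ x ∈ C, ∀ r : ℝ, 0 ≤ r → r • x ∈ C) ∧ ∀ x ∈ C, ∀ y ∈ C, x + y ∈ C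

/-- A face of a convex cone: a convex subcone such that `x, y ∈ C` and `x + y ∈ F`
imply `x, y ∈ F`. -/
def IsConeFace {E : Type*} [AddCommMonoid E] [SMul ℝ E] (C F : Set E) : Prop :=
  F ⊆ C ∧ (∀ x ∈ F, ∀ r : ℝ, 0 ≤ r → r • x ∈ F) ∧ (∀ x ∈ F, ∀ y ∈ F, x + y ∈ F) ∧
    ∀ x ∈ C, ∀ y ∈ C, x + y ∈ F → x ∈ F ∧ y ∈ F

/-- The convex cone generated by the union of two convex cones:
`conv(C₁, C₂) = {x₁ + x₂ : x₁ ∈ C₁, x₂ ∈ C₂}`. -/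
def coneJoin {E : Type*} [AddCommMonoid E] (C₁ C₂ : Set E) : Set E :=
  {x | ∃ x₁ ∈ C₁, ∃ x₂ ∈ C₂, x = x₁ + x₂}

theorem face_of_coneJoin {E : Type*} [AddCommGroup E] [Module ℝ E] [FiniteDimensional ℝ E]
    (C₁ C₂ F : Set E) (h₁ : IsConvexCone C₁) (h₂ : IsConvexCone C₂)
    (hF : IsConeFace (coneJoin C₁ C₂) F) :
    IsConeFace C₁ (F ∩ C₁) ∧ IsConeFace C₂ (F ∩ C₂) ∧
      F = coneJoin (F ∩ C₁) (F ∩ C₂) := by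
  obtain ⟨hsub, hsmul, hadd, hface⟩ := hF
  have hC₁J : C₁ ⊆ coneJoin C₁ C₂ := fun x hx =>
    ⟨x, hx, 0, h₂.1, by simp⟩
  have hC₂J : C₂ ⊆ coneJoin C₁ C₂ := fun x hx =>
    ⟨0, h₁.1, x, hx, by simp⟩
  refine ⟨⟨fun x hx => hx.2,
    fun x hx r hr => ⟨hsmul x hx.1 r hr, h₁.2.1 x hx.2 r hr⟩,
    fun x hx y hy => ⟨hadd x hx.1 y hy.1, h₁.2.2 x hx.2 y hy.2⟩,
    fun x hx y hy hxy => ⟨⟨(hface x (hC₁J hx) y (hC₁J hy) hxy.1).1, hx⟩,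
      ⟨(hface x (hC₁J hx) y (hC₁J hy) hxy.1).2, hy⟩⟩⟩,
    ⟨fun x hx => hx.2,
    fun x hx r hr => ⟨hsmul x hx.1 r hr, h₂.2.1 x hx.2 r hr⟩,
    fun x hx y hy => ⟨hadd x hx.1 y hy.1, h₂.2.2 x hx.2 y hy.2⟩,
    fun x hx y hy hxy => ⟨⟨(hface x (hC₂J hx) y (hC₂J hy) hxy.1).1, hx⟩,
      ⟨(hface x (hC₂J hx) y (hC₂J hy) hxy.1).2, hy⟩⟩⟩, ?_⟩
  ext x
  constructor
  · intro hx
    obtain ⟨x₁, hx₁, x₂, hx₂, rfl⟩ := hsub hx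
    obtain ⟨h1, h2⟩ := hface x₁ (hC₁J hx₁) x₂ (hC₂J hx₂) hx
    exact ⟨x₁, ⟨h1, hx₁⟩, x₂, ⟨h2, hx₂⟩, rfl⟩
  · rintro ⟨x₁, hx₁, x₂, hx₂, rfl⟩
    exact hadd x₁ hx₁.1 x₂ hx₂.1
end

section
/- Let C be a closed convex cone in a finite-dimensional real inner product space, F a face of C, and x0 a relative interior point of F. Then F′ = {x0}′, i.e., {y ∈ C° : ⟨x, y⟩ = 0 for all x ∈ F} equals {y ∈ C° : ⟨x0, y⟩ = 0}. -/
open RealInnerProductSpace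

/-- The dual cone of a subset of a real inner product space. -/
def dualCone {E : Type*} [NormedAddCommGroup E] [InnerProductSpace ℝ E] (C : Set E) : Set E :=
  {y | ∀ x ∈ C, 0 ≤ ⟪x, y⟫}

/-- The dual face `S′` of a subset `S` of a cone `C`, taken inside the dual cone `C°`. -/
def dualFace {E : Type*} [NormedAddCommGroup E] [InnerProductSpace ℝ E]
    (C S : Set E) : Set E :=
  {y ∈ dualCone C | ∀ x ∈ S, ⟪x, y⟫ = 0}


lemma exists_pos_smul_mem_of_mem_intrinsicInterior {E : Type*} [NormedAddCommGroup E]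
    [InnerProductSpace ℝ E] (F : Set E) (x₀ x : E)
    (hx₀ : x₀ ∈ intrinsicInterior ℝ F) (hx : x ∈ F) :
    ∃ ε : ℝ, 0 < ε ∧ x₀ + ε • (x₀ - x) ∈ F := by
  obtain ⟨⟨y, hyspan⟩, hy, rfl⟩ := hx₀
  rw [mem_interior_iff_mem_nhds, Metric.mem_nhds_iff] at hy
  obtain ⟨ε, hε, hball⟩ := hy
  have hnorm : (0:ℝ) < ‖y - x‖ + 1 := by positivity
  set δ : ℝ := ε / (2 * (‖y - x‖ + 1)) with hδdef
  have hδ : 0 < δ := by positivity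
  refine ⟨δ, hδ, ?_⟩
  have hzspan : y + δ • (y - x) ∈ affineSpan ℝ F := by
    have := AffineSubspace.smul_vsub_vadd_mem (affineSpan ℝ F) δ hyspan
      (subset_affineSpan ℝ F hx) hyspan
    simpa [vsub_eq_sub, vadd_eq_add, add_comm] using this
  have hmem : (⟨y + δ • (y - x), hzspan⟩ : affineSpan ℝ F) ∈
      Metric.ball (⟨y, hyspan⟩ : affineSpan ℝ F) ε := by
    rw [Metric.mem_ball, Subtype.dist_eq]
    have : dist (y + δ • (y - x)) y = δ * ‖y - x‖ := by
      rw [dist_eq_norm, add_sub_cancel_left, norm_smul, Real.norm_eq_abs, abs_of_pos hδ]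
    rw [this]
    have h1 : δ * ‖y - x‖ < δ * (‖y - x‖ + 1) := by
      exact mul_lt_mul_of_pos_left (by linarith) hδ
    have h2 : δ * (‖y - x‖ + 1) = ε / 2 := by
      field_simp [hδdef]
      rw [hδdef]
      field_simp
    linarith
  exact hball hmem

theorem dualFace_eq_dualFace_of_mem_intrinsicInterior {E : Type*} [NormedAddCommGroup E]
    [InnerProductSpace ℝ E] [FiniteDimensional ℝ E] (C F : Set E)
    (hC : IsConvexCone C) (hc : IsClosed C) (hF : IsConeFace C F)
    (x₀ : E) (hx₀ : x₀ ∈ intrinsicInterior ℝ F) :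
    dualFace C F = {y ∈ dualCone C | ⟪x₀, y⟫ = 0} := by
  have hFC := hF.1
  have hx₀F : x₀ ∈ F := intrinsicInterior_subset hx₀
  ext y
  simp only [dualFace, Set.mem_setOf_eq, Set.mem_sep_iff]
  constructor
  · rintro ⟨hyC, hy0⟩
    exact ⟨hyC, hy0 x₀ hx₀F⟩
  · rintro ⟨hyC, hy0⟩
    refine ⟨hyC, fun x hx => ?_⟩
    obtain ⟨ε, hε, hmem⟩ := exists_pos_smul_mem_of_mem_intrinsicInterior F x₀ x hx₀ hx
    have h1 : 0 ≤ ⟪x₀ + ε • (x₀ - x), y⟫ := hyC _ (hFC hmem)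
    have h2 : 0 ≤ ⟪x, y⟫ := hyC x (hFC hx)
    have h3 : ⟪x₀ + ε • (x₀ - x), y⟫ = ⟪x₀, y⟫ + ε * (⟪x₀, y⟫ - ⟪x, y⟫) := by
      rw [inner_add_left, real_inner_smul_left, inner_sub_left]
    rw [h3, hy0] at h1
    nlinarith
end

section
/- A face F of a closed convex cone C in a finite-dimensional real inner product space is exposed (i.e., F = x′ for some x ∈ C°) if and only if F = F′′. -/
open RealInnerProductSpace

theorem exposed_iff_eq_double_dualFace {E : Type*} [NormedAddCommGroup E]
    [InnerProductSpace ℝ E] [FiniteDimensional ℝ E] (C F : Set E)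
    (hC : IsConvexCone C) (hc : IsClosed C) (hF : IsConeFace C F) :
    (∃ x ∈ dualCone C, F = {z ∈ C | ⟪z, x⟫ = 0}) ↔
      F = {z ∈ C | ∀ y ∈ dualFace C F, ⟪z, y⟫ = 0} := by
  constructor
  · rintro ⟨x, hx, rfl⟩
    ext z
    simp only [Set.mem_setOf_eq]
    constructor
    · rintro ⟨hzC, hz⟩
      exact ⟨hzC, fun y hy => hy.2 z ⟨hzC, hz⟩⟩
    · rintro ⟨hzC, hz⟩
      exact ⟨hzC, hz x ⟨hx, fun w hw => hw.2⟩⟩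
  · intro hFF
    obtain ⟨t, hts, hspan, hli⟩ := exists_linearIndependent ℝ (dualFace C F)
    have htfin : t.Finite := hli.setFinite
    set x : E := ∑ y ∈ htfin.toFinset, y with hxdef
    have hkey : ∀ z : E, ⟪z, x⟫ = ∑ y ∈ htfin.toFinset, ⟪z, y⟫ := fun z => inner_sum _ _ _
    have hmem : ∀ y ∈ htfin.toFinset, y ∈ dualFace C F := fun y hy =>
      hts (htfin.mem_toFinset.mp hy)
    refine ⟨x, ?_, ?_⟩
    · intro z hz
      rw [hkey]
      exact Finset.sum_nonneg fun y hy => (hmem y hy).1 z hz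
    · rw [hFF]
      ext z
      simp only [Set.mem_setOf_eq]
      constructor
      · rintro ⟨hzC, hz⟩
        refine ⟨hzC, ?_⟩
        rw [hkey]
        exact Finset.sum_eq_zero fun y hy => hz y (hmem y hy)
      · rintro ⟨hzC, hz⟩
        refine ⟨hzC, fun y hy => ?_⟩
        rw [hkey] at hz
        have hterm : ∀ w ∈ htfin.toFinset, ⟪z, w⟫ = 0 :=
          (Finset.sum_eq_zero_iff_of_nonneg fun w hw => (hmem w hw).1 z hzC).mp hz
        have hker : t ⊆ (LinearMap.ker (innerSL ℝ z) : Submodule ℝ E) := fun w hw => by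
          show innerSL ℝ z w = 0
          rw [innerSL_apply_apply]
          exact hterm w (htfin.mem_toFinset.mpr hw)
        have hy' : y ∈ Submodule.span ℝ t := by
          rw [hspan]; exact Submodule.subset_span hy
        have := Submodule.span_le.mpr hker hy'
        simpa using this
end

section
/- For m×n complex matrices z and V, the pairing of the partial transpose (z̃ z̃*)^τ with the completely copositive map φ^V : X ↦ V* Xᵗ V equals |(z | V)|². -/
open Matrix Kronecker ComplexConjugate ComplexOrder

/-- The vectorization `z̃` of an `m × n` matrix `z`: `z̃ = Σᵢ zᵢ ⊗ eᵢ ∈ ℂⁿ ⊗ ℂᵐ`,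
so that the `(k, i)` coordinate of `z̃` is `z i k`. -/
def vecz {m n : ℕ} (z : Matrix (Fin m) (Fin n) ℂ) : Fin n × Fin m → ℂ :=
  fun p => z p.2 p.1

/-- The partial transpose (block transpose) of an element of `M_n ⊗ M_m`, viewed as a
matrix indexed by `Fin n × Fin m`: the block `a_{ij}` is sent to `a_{ji}`. -/
def ptr {m n : ℕ} (A : Matrix (Fin n × Fin m) (Fin n × Fin m) ℂ) :
    Matrix (Fin n × Fin m) (Fin n × Fin m) ℂ :=
  Matrix.of fun p q => A (p.1, q.2) (q.1, p.2)

/-- The bilinear pairing `⟨A, φ⟩ = Σ_{i,j} ⟨φ(e_{ij}), a_{ij}⟩` between block matrices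
in `M_n ⊗ M_m` and maps `φ : M_m → M_n`, where `⟨X, Y⟩ = Tr(Y Xᵗ)`. -/
noncomputable def matPairing {m n : ℕ} (A : Matrix (Fin n × Fin m) (Fin n × Fin m) ℂ)
    (φ : Matrix (Fin m) (Fin m) ℂ → Matrix (Fin n) (Fin n) ℂ) : ℂ :=
  ∑ i : Fin m, ∑ j : Fin m, ∑ k : Fin n, ∑ l : Fin n,
    φ (Matrix.single i j 1) k l * A (k, i) (l, j)

theorem pairing_rankone_ptr_cocp (m n : ℕ) (z V : Matrix (Fin m) (Fin n) ℂ) :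
    matPairing (ptr (Matrix.of fun p q => vecz z p * conj (vecz z q)))
        (fun X => Vᴴ * Xᵀ * V)
      = (Complex.normSq (∑ i : Fin m, ∑ k : Fin n, z i k * conj (V i k)) : ℂ) := by
  rw [← Complex.mul_conj]
  simp only [matPairing, ptr, vecz, Matrix.of_apply, Matrix.mul_apply,
    Matrix.transpose_apply, Matrix.conjTranspose_apply, Matrix.single,
    Matrix.of_apply, Finset.mul_sum, Finset.sum_mul, map_sum, _root_.map_mul]
  simp only [mul_ite, mul_one, mul_zero, ite_mul, zero_mul, ite_and,
    Finset.sum_ite_eq, Finset.sum_ite_eq', Finset.mem_univ, if_true,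
    RingHom.id_apply, Complex.conj_conj]
  simp only [Finset.sum_ite_irrel, Finset.sum_const_zero, Finset.sum_ite_eq,
    Finset.sum_ite_eq', Finset.mem_univ, if_true]
  refine Finset.sum_congr rfl fun i _ => ?_
  conv_lhs => enter [2, j]; rw [Finset.sum_comm]
  rw [Finset.sum_comm]
  refine Finset.sum_congr rfl fun l _ => ?_
  refine Finset.sum_congr rfl fun j _ => ?_
  refine Finset.sum_congr rfl fun k _ => ?_
  simp only [RCLike.star_def]
  ring
end

section
/- Let A be a positive semi-definite matrix in M_n ⊗ M_m with positive semi-definite partial transpose, and suppose the dual face A′ of A in the cone of decomposable maps equals conv(Φ_D, Φ^E) with conv(Φ_D, Φ^E) ∩ CP = Φ_D and conv(Φ_D, Φ^E) ∩ coCP = Φ^E. Then the range of A equals the orthogonal complement of D̃ and the range of A^τ equals the orthogonal complement of Ẽ. -/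
open Matrix Kronecker ComplexConjugate ComplexOrder

/-- The cone of completely positive maps `M_m → M_n`:
maps of the form `X ↦ Σᵢ Vᵢ* X Vᵢ`. -/
def CPmaps (m n : ℕ) : Set (Matrix (Fin m) (Fin m) ℂ → Matrix (Fin n) (Fin n) ℂ) :=
  {φ | ∃ (N : ℕ) (V : Fin N → Matrix (Fin m) (Fin n) ℂ),
    ∀ X, φ X = ∑ i, (V i)ᴴ * X * V i}

/-- The cone of completely copositive maps `M_m → M_n`:
maps of the form `X ↦ Σᵢ Vᵢ* Xᵗ Vᵢ`. -/
def coCPmaps (m n : ℕ) : Set (Matrix (Fin m) (Fin m) ℂ → Matrix (Fin n) (Fin n) ℂ) :=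
  {φ | ∃ (N : ℕ) (V : Fin N → Matrix (Fin m) (Fin n) ℂ),
    ∀ X, φ X = ∑ i, (V i)ᴴ * Xᵀ * V i}

/-- The face `Φ_D` of the completely positive cone determined by a subspace
`D ⊆ M_{m×n}`. -/
def PhiCP {m n : ℕ} (D : Submodule ℂ (Matrix (Fin m) (Fin n) ℂ)) :
    Set (Matrix (Fin m) (Fin m) ℂ → Matrix (Fin n) (Fin n) ℂ) :=
  {φ | ∃ (N : ℕ) (V : Fin N → Matrix (Fin m) (Fin n) ℂ),
    (∀ i, V i ∈ D) ∧ ∀ X, φ X = ∑ i, (V i)ᴴ * X * V i}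

/-- The face `Φ^E` of the completely copositive cone determined by a subspace
`E ⊆ M_{m×n}`. -/
def PhiCoCP {m n : ℕ} (E : Submodule ℂ (Matrix (Fin m) (Fin n) ℂ)) :
    Set (Matrix (Fin m) (Fin m) ℂ → Matrix (Fin n) (Fin n) ℂ) :=
  {φ | ∃ (N : ℕ) (V : Fin N → Matrix (Fin m) (Fin n) ℂ),
    (∀ i, V i ∈ E) ∧ ∀ X, φ X = ∑ i, (V i)ᴴ * Xᵀ * V i}

/-- The convex hull `conv(S, T) = {φ₁ + φ₂ : φ₁ ∈ S, φ₂ ∈ T}` of two cones. -/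
def convJoin {α : Type*} [Add α] (S T : Set α) : Set α :=
  {φ | ∃ φ₁ ∈ S, ∃ φ₂ ∈ T, φ = φ₁ + φ₂}

/-- The cone `𝔻` of decomposable maps: sums of a completely positive and a completely
copositive map. -/
def decMaps (m n : ℕ) : Set (Matrix (Fin m) (Fin m) ℂ → Matrix (Fin n) (Fin n) ℂ) :=
  convJoin (CPmaps m n) (coCPmaps m n)

/-- The cone `𝕋` of positive semi-definite block matrices whose partial transpose is
also positive semi-definite. -/
def TTcone (m n : ℕ) : Set (Matrix (Fin n × Fin m) (Fin n × Fin m) ℂ) :=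
  {A | A.PosSemidef ∧ (ptr A).PosSemidef}

/-! ### Auxiliary lemmas -/

/-- `vecz` as a linear map into Euclidean space. -/
noncomputable def veczL (m n : ℕ) :
    Matrix (Fin m) (Fin n) ℂ →ₗ[ℂ] EuclideanSpace ℂ (Fin n × Fin m) where
  toFun z := WithLp.toLp 2 (vecz z)
  map_add' _ _ := rfl
  map_smul' _ _ := rfl

lemma veczL_apply {m n : ℕ} (z : Matrix (Fin m) (Fin n) ℂ) : veczL m n z = vecz z := rfl

lemma sum_conj_self_eq_zero {ι : Type} [Fintype ι] (x : ι → ℂ)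
    (h : ∑ p, x p * conj (x p) = 0) : x = 0 := by
  funext p
  have h' : ∑ p, Complex.normSq (x p) = 0 := by
    have := h
    simp only [Complex.mul_conj] at this
    exact_mod_cast this
  have := (Finset.sum_eq_zero_iff_of_nonneg
    (fun i _ => Complex.normSq_nonneg _)).mp h' p (Finset.mem_univ p)
  exact Complex.normSq_eq_zero.mp this

lemma swap_lem {ι : Type} [Fintype ι] (B : Matrix ι ι ℂ) (hB : B.IsHermitian) (u w : ι → ℂ) :
    ∑ p, B.mulVec u p * conj (w p) = ∑ q, u q * conj (B.mulVec w q) := by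
  calc ∑ p, B.mulVec u p * conj (w p)
      = ∑ p, ∑ q, B p q * u q * conj (w p) := by
        simp [Matrix.mulVec, dotProduct, Finset.sum_mul]
    _ = ∑ q, ∑ p, B p q * u q * conj (w p) := Finset.sum_comm
    _ = ∑ q, u q * conj (B.mulVec w q) := by
        refine Finset.sum_congr rfl fun q _ => ?_
        simp only [Matrix.mulVec, dotProduct, map_sum, Finset.mul_sum]
        refine Finset.sum_congr rfl fun p _ => ?_
        rw [_root_.map_mul]
        have hc : conj (B q p) = B p q := by rw [← hB.apply p q]; rfl
        rw [hc]; ring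

lemma stdmul_apply {m n : ℕ} (z w : Matrix (Fin m) (Fin n) ℂ) (i j : Fin m) (k l : Fin n) :
    (zᴴ * Matrix.single i j (1:ℂ) * w) k l = conj (z i k) * w j l := by
  simp [Matrix.mul_apply, Matrix.single, Matrix.conjTranspose_apply, ite_and, mul_ite,
    ite_mul, Finset.sum_ite_eq, Finset.sum_ite_eq']

lemma std_transpose {m : ℕ} (i j : Fin m) :
    (Matrix.single i j (1:ℂ))ᵀ = Matrix.single j i 1 := by
  ext a b
  simp [Matrix.single, Matrix.transpose_apply, and_comm]

lemma matPairing_kraus {m n : ℕ} (A : Matrix (Fin n × Fin m) (Fin n × Fin m) ℂ)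
    (z : Matrix (Fin m) (Fin n) ℂ) :
    matPairing A (fun X => zᴴ * X * z) = star (vecz z) ⬝ᵥ A.mulVec (vecz z) := by
  calc matPairing A (fun X => zᴴ * X * z)
      = ∑ x : (Fin m × Fin m) × Fin n × Fin n,
          conj (z x.1.1 x.2.1) * z x.1.2 x.2.2 * A (x.2.1, x.1.1) (x.2.2, x.1.2) := by
        unfold matPairing
        simp only [stdmul_apply]
        simp [Fintype.sum_prod_type]
    _ = ∑ y : (Fin n × Fin m) × Fin n × Fin m,
          conj (vecz z y.1) * vecz z y.2 * A y.1 y.2 :=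
        Fintype.sum_equiv (⟨fun x => ((x.2.1, x.1.1), (x.2.2, x.1.2)),
          fun y => ((y.1.2, y.2.2), (y.1.1, y.2.1)), by rintro ⟨⟨_,_⟩,_,_⟩; rfl,
          by rintro ⟨⟨_,_⟩,_,_⟩; rfl⟩ :
            ((Fin m × Fin m) × Fin n × Fin n) ≃ ((Fin n × Fin m) × Fin n × Fin m)) _ _
          (fun x => by rcases x with ⟨⟨i,j⟩,k,l⟩; rfl)
    _ = ∑ p : Fin n × Fin m, ∑ q : Fin n × Fin m, conj (vecz z p) * vecz z q * A p q := by
        rw [Fintype.sum_prod_type]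
    _ = star (vecz z) ⬝ᵥ A.mulVec (vecz z) := by
        simp only [dotProduct, Matrix.mulVec, Pi.star_apply, RCLike.star_def, Finset.mul_sum]
        exact Finset.sum_congr rfl fun p _ => Finset.sum_congr rfl fun q _ => by ring

lemma matPairing_kraus' {m n : ℕ} (A : Matrix (Fin n × Fin m) (Fin n × Fin m) ℂ)
    (z : Matrix (Fin m) (Fin n) ℂ) :
    matPairing A (fun X => zᴴ * Xᵀ * z) = star (vecz z) ⬝ᵥ (ptr A).mulVec (vecz z) := by
  calc matPairing A (fun X => zᴴ * Xᵀ * z)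
      = ∑ x : (Fin m × Fin m) × Fin n × Fin n,
          conj (z x.1.2 x.2.1) * z x.1.1 x.2.2 * A (x.2.1, x.1.1) (x.2.2, x.1.2) := by
        unfold matPairing
        simp only [std_transpose, stdmul_apply]
        simp [Fintype.sum_prod_type]
    _ = ∑ y : (Fin n × Fin m) × Fin n × Fin m,
          conj (vecz z y.1) * vecz z y.2 * (ptr A) y.1 y.2 :=
        Fintype.sum_equiv (⟨fun x => ((x.2.1, x.1.2), (x.2.2, x.1.1)),
          fun y => ((y.2.2, y.1.2), (y.1.1, y.2.1)), by rintro ⟨⟨_,_⟩,_,_⟩; rfl,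
          by rintro ⟨⟨_,_⟩,_,_⟩; rfl⟩ :
            ((Fin m × Fin m) × Fin n × Fin n) ≃ ((Fin n × Fin m) × Fin n × Fin m)) _ _
          (fun x => by rcases x with ⟨⟨i,j⟩,k,l⟩; rfl)
    _ = ∑ p : Fin n × Fin m, ∑ q : Fin n × Fin m, conj (vecz z p) * vecz z q * (ptr A) p q := by
        rw [Fintype.sum_prod_type]
    _ = star (vecz z) ⬝ᵥ (ptr A).mulVec (vecz z) := by
        simp only [dotProduct, Matrix.mulVec, Pi.star_apply, RCLike.star_def, Finset.mul_sum]
        exact Finset.sum_congr rfl fun p _ => Finset.sum_congr rfl fun q _ => by ring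

lemma mem_of_choi {m n : ℕ} (D : Submodule ℂ (Matrix (Fin m) (Fin n) ℂ))
    (z : Matrix (Fin m) (Fin n) ℂ) {N : ℕ} (V : Fin N → Matrix (Fin m) (Fin n) ℂ)
    (hVD : ∀ i, V i ∈ D)
    (h : ∀ p q : Fin n × Fin m, conj (vecz z p) * vecz z q
        = ∑ i, conj (vecz (V i) p) * vecz (V i) q) :
    z ∈ D := by
  classical
  set S : Submodule ℂ (EuclideanSpace ℂ (Fin n × Fin m)) := D.map (veczL m n) with hS
  obtain ⟨a, ha, b, hb, hab⟩ := S.exists_add_mem_mem_orthogonal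
    (WithLp.toLp 2 (vecz z) : EuclideanSpace ℂ (Fin n × Fin m))
  have hinner : ∀ u ∈ S, ∑ p, conj (u p) * b p = 0 := by
    intro u hu
    have := (Submodule.mem_orthogonal S b).mp hb u hu
    simpa [PiLp.inner_apply, RCLike.inner_apply, mul_comm] using this
  have hVb : ∀ i, ∑ p, conj (b p) * vecz (V i) p = 0 := by
    intro i
    have h1 := hinner (veczL m n (V i)) (Submodule.mem_map_of_mem (hVD i))
    have h2 := congrArg conj h1
    simpa [veczL_apply, map_sum, mul_comm] using h2
  have hconj : ∀ p q : Fin n × Fin m, vecz z p * conj (vecz z q)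
      = ∑ i, vecz (V i) p * conj (vecz (V i) q) := by
    intro p q
    have := congrArg conj (h p q)
    simpa [map_sum, mul_comm] using this
  have ht : ∑ p, conj (b p) * vecz z p = 0 := by
    have hct : conj (∑ q, conj (b q) * vecz z q) = ∑ q, b q * conj (vecz z q) := by
      rw [map_sum]
      exact Finset.sum_congr rfl fun q _ => by simp
    have hexp : (∑ p, conj (b p) * vecz z p) * conj (∑ q, conj (b q) * vecz z q) = 0 := by
      rw [hct, Finset.sum_mul_sum,
        ← Fintype.sum_prod_type (f := fun x : (Fin n × Fin m) × (Fin n × Fin m) =>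
          (conj (b x.1) * vecz z x.1) * (b x.2 * conj (vecz z x.2)))]
      calc ∑ x : (Fin n × Fin m) × (Fin n × Fin m),
              (conj (b x.1) * vecz z x.1) * (b x.2 * conj (vecz z x.2))
          = ∑ x : (Fin n × Fin m) × (Fin n × Fin m),
              ∑ i, (conj (b x.1) * vecz (V i) x.1) * (b x.2 * conj (vecz (V i) x.2)) := by
            refine Finset.sum_congr rfl fun x _ => ?_
            calc (conj (b x.1) * vecz z x.1) * (b x.2 * conj (vecz z x.2))
                = conj (b x.1) * b x.2 * (vecz z x.1 * conj (vecz z x.2)) := by ring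
              _ = conj (b x.1) * b x.2 * ∑ i, vecz (V i) x.1 * conj (vecz (V i) x.2) := by
                  rw [hconj]
              _ = ∑ i, (conj (b x.1) * vecz (V i) x.1) * (b x.2 * conj (vecz (V i) x.2)) := by
                  rw [Finset.mul_sum]
                  exact Finset.sum_congr rfl fun i _ => by ring
        _ = ∑ i, ∑ x : (Fin n × Fin m) × (Fin n × Fin m),
              (conj (b x.1) * vecz (V i) x.1) * (b x.2 * conj (vecz (V i) x.2)) :=
            Finset.sum_comm
        _ = ∑ i, (∑ p, conj (b p) * vecz (V i) p) * (∑ q, b q * conj (vecz (V i) q)) := by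
            refine Finset.sum_congr rfl fun i _ => ?_
            rw [Finset.sum_mul_sum,
              ← Fintype.sum_prod_type (f := fun x : (Fin n × Fin m) × (Fin n × Fin m) =>
                (conj (b x.1) * vecz (V i) x.1) * (b x.2 * conj (vecz (V i) x.2)))]
        _ = 0 := by simp [hVb]
    rcases mul_eq_zero.mp hexp with h0 | h0
    · exact h0
    · simpa using congrArg conj h0
  have hba : ∑ p, conj (b p) * a p = 0 := by
    have h2 := congrArg conj (hinner a ha)
    simpa [map_sum, mul_comm] using h2
  have hbb : b = 0 := by
    have hsum : ∑ p, conj (b p) * b p = 0 := by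
      have hz : ∀ p, (WithLp.toLp 2 (vecz z) : EuclideanSpace ℂ (Fin n × Fin m)) p = a p + b p := by
        intro p; rw [hab]; rfl
      calc ∑ p, conj (b p) * b p
          = (∑ p, conj (b p) * vecz z p) - ∑ p, conj (b p) * a p := by
            rw [← Finset.sum_sub_distrib]
            refine Finset.sum_congr rfl fun p _ => ?_
            rw [show vecz z p = a p + b p from hz p]; ring
        _ = 0 := by rw [ht, hba, sub_zero]
    have : ∑ p, b p * conj (b p) = 0 := by
      rw [← hsum]; exact Finset.sum_congr rfl fun p _ => mul_comm _ _
    have hb0 := sum_conj_self_eq_zero (fun p => b p) this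
    ext p
    exact congrFun hb0 p
  rw [hbb, add_zero] at hab
  have hmem : (WithLp.toLp 2 (vecz z) : EuclideanSpace ℂ (Fin n × Fin m)) ∈ S := by rw [hab]; exact ha
  obtain ⟨z', hz'D, hz'⟩ := hmem
  have : z' = z := by
    funext i k
    exact congrArg (fun f : EuclideanSpace ℂ (Fin n × Fin m) => f (k, i)) hz'
  exact this ▸ hz'D

lemma range_eq_orth {m n : ℕ} (B : Matrix (Fin n × Fin m) (Fin n × Fin m) ℂ)
    (hB : B.PosSemidef) (D : Submodule ℂ (Matrix (Fin m) (Fin n) ℂ))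
    (h1 : ∀ z ∈ D, B.mulVec (vecz z) = 0)
    (h2 : ∀ w : Fin n × Fin m → ℂ, B.mulVec w = 0 → ∃ z ∈ D, vecz z = w) :
    Set.range B.mulVec
      = {v | ∀ z ∈ D, ∑ p : Fin n × Fin m, v p * conj (vecz z p) = 0} := by
  classical
  ext v
  constructor
  · rintro ⟨u, rfl⟩ z hz
    rw [swap_lem B hB.1 u (vecz z)]
    simp [h1 z hz]
  · intro hv
    let T : EuclideanSpace ℂ (Fin n × Fin m) →ₗ[ℂ] EuclideanSpace ℂ (Fin n × Fin m) :=
      { toFun := fun x => WithLp.toLp 2 (B.mulVec x)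
        map_add' := fun x y => congrArg (WithLp.toLp 2) (B.mulVec_add x y)
        map_smul' := fun c x => congrArg (WithLp.toLp 2) (B.mulVec_smul c x) }
    set S : Submodule ℂ (EuclideanSpace ℂ (Fin n × Fin m)) := LinearMap.range T with hSdef
    obtain ⟨a, ha, b, hb, hab⟩ := S.exists_add_mem_mem_orthogonal
      (WithLp.toLp 2 v : EuclideanSpace ℂ (Fin n × Fin m))
    have hdb : ∀ u : Fin n × Fin m → ℂ, ∑ p, B.mulVec u p * conj (b p) = 0 := by
      intro u
      have hmem : T (WithLp.toLp 2 u) ∈ S := LinearMap.mem_range_self T (WithLp.toLp 2 u)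
      have h0 := (Submodule.mem_orthogonal S b).mp hb (T (WithLp.toLp 2 u)) hmem
      have h2' := congrArg conj h0
      simp [T, PiLp.inner_apply, RCLike.inner_apply, map_sum, mul_comm] at h2'; exact h2'
    have hBb : B.mulVec b = 0 := by
      have h3 : ∀ u : Fin n × Fin m → ℂ, ∑ q, u q * conj (B.mulVec b q) = 0 := fun u => by
        rw [← swap_lem B hB.1 u b]; exact hdb u
      have h4 := h3 (fun q => B.mulVec b q)
      have h5 := sum_conj_self_eq_zero (fun q => B.mulVec b q) h4
      funext q; exact congrFun h5 q
    obtain ⟨zb, hzbD, hzb⟩ := h2 b hBb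
    have hvb : ∑ p, v p * conj (b p) = 0 := by
      have := hv zb hzbD
      rwa [hzb] at this
    obtain ⟨u, hu⟩ := ha
    have hab0 : ∑ p, a p * conj (b p) = 0 := by
      have h6 : ∑ p, B.mulVec u p * conj (b p) = 0 := hdb u
      have h7 : ∀ p, a p = B.mulVec u p := by
        intro p; rw [← hu]; rfl
      calc ∑ p, a p * conj (b p) = ∑ p, B.mulVec u p * conj (b p) := by
            exact Finset.sum_congr rfl fun p _ => by rw [h7 p]
        _ = 0 := h6
    have hbb : b = 0 := by
      have hz : ∀ p, b p = v p - a p := by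
        intro p
        have h8 := congrArg (fun f : EuclideanSpace ℂ (Fin n × Fin m) => f p) hab
        have h9 : v p = a p + b p := h8
        rw [h9]; ring
      have hsum : ∑ p, b p * conj (b p) = 0 := by
        calc ∑ p, b p * conj (b p)
            = (∑ p, v p * conj (b p)) - ∑ p, a p * conj (b p) := by
              rw [← Finset.sum_sub_distrib]
              exact Finset.sum_congr rfl fun p _ => by rw [hz p]; ring
          _ = 0 := by rw [hvb, hab0, sub_zero]
      have h5 := sum_conj_self_eq_zero (fun p => b p) hsum
      ext p; exact congrFun h5 p
    refine ⟨u, ?_⟩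
    have : v = a := by
      funext p
      have h8 := congrArg (fun f : EuclideanSpace ℂ (Fin n × Fin m) => f p) hab
      have h9 : v p = a p + b p := h8
      have hb0 : b p = 0 := by rw [hbb]; rfl
      rw [h9, hb0, add_zero]
    rw [this, ← hu]; rfl

theorem range_eq_of_dualFace_eq (m n : ℕ) (A : Matrix (Fin n × Fin m) (Fin n × Fin m) ℂ)
    (D E : Submodule ℂ (Matrix (Fin m) (Fin n) ℂ))
    (hA : A.PosSemidef) (hAτ : (ptr A).PosSemidef)
    (hdual : {φ ∈ decMaps m n | matPairing A φ = 0} = convJoin (PhiCP D) (PhiCoCP E))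
    (hcapCP : convJoin (PhiCP D) (PhiCoCP E) ∩ CPmaps m n = PhiCP D)
    (hcapCoCP : convJoin (PhiCP D) (PhiCoCP E) ∩ coCPmaps m n = PhiCoCP E) :
    Set.range A.mulVec = {v | ∀ z ∈ D, ∑ p : Fin n × Fin m, v p * conj (vecz z p) = 0} ∧
    Set.range (ptr A).mulVec
      = {v | ∀ z ∈ E, ∑ p : Fin n × Fin m, v p * conj (vecz z p) = 0} := by
  classical
  -- the rank-one CP map attached to `z`, presented as a sum `φ₁ + φ₂`
  have hφCP : ∀ z : Matrix (Fin m) (Fin n) ℂ,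
      ((fun X : Matrix (Fin m) (Fin m) ℂ => ∑ _i : Fin 1, zᴴ * X * z) + fun X : Matrix (Fin m) (Fin m) ℂ => ∑ i : Fin 0,
        ((fun _ : Fin 0 => (0 : Matrix (Fin m) (Fin n) ℂ)) i)ᴴ * Xᵀ *
          (fun _ : Fin 0 => (0 : Matrix (Fin m) (Fin n) ℂ)) i)
      = fun X : Matrix (Fin m) (Fin m) ℂ => zᴴ * X * z := by
    intro z; funext X; simp
  have hφCoCP : ∀ z : Matrix (Fin m) (Fin n) ℂ,
      ((fun X : Matrix (Fin m) (Fin m) ℂ => ∑ i : Fin 0,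
        ((fun _ : Fin 0 => (0 : Matrix (Fin m) (Fin n) ℂ)) i)ᴴ * X *
          (fun _ : Fin 0 => (0 : Matrix (Fin m) (Fin n) ℂ)) i) + fun X : Matrix (Fin m) (Fin m) ℂ => ∑ _i : Fin 1, zᴴ * Xᵀ * z)
      = fun X : Matrix (Fin m) (Fin m) ℂ => zᴴ * Xᵀ * z := by
    intro z; funext X; simp
  -- rank-one CP maps attached to elements of D lie in the dual face
  have hmemCP : ∀ z : Matrix (Fin m) (Fin n) ℂ,
      (fun X => zᴴ * X * z) ∈ decMaps m n := by
    intro z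
    exact ⟨_, ⟨1, fun _ => z, fun X => rfl⟩, _, ⟨0, fun _ => 0, fun X => rfl⟩, (hφCP z).symm⟩
  have hmemCoCP : ∀ z : Matrix (Fin m) (Fin n) ℂ,
      (fun X => zᴴ * Xᵀ * z) ∈ decMaps m n := by
    intro z
    exact ⟨_, ⟨0, fun _ => 0, fun X => rfl⟩, _, ⟨1, fun _ => z, fun X => rfl⟩, (hφCoCP z).symm⟩
  constructor
  · refine range_eq_orth A hA D ?_ ?_
    · -- h1 : A kills D̃
      intro z hz
      have hmem : (fun X => zᴴ * X * z) ∈ convJoin (PhiCP D) (PhiCoCP E) :=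
        ⟨_, ⟨1, fun _ => z, fun _ => hz, fun X => rfl⟩,
         _, ⟨0, fun _ => 0, fun i => i.elim0, fun X => rfl⟩, (hφCP z).symm⟩
      rw [← hdual] at hmem
      have hpair : matPairing A (fun X => zᴴ * X * z) = 0 := hmem.2
      rw [matPairing_kraus] at hpair
      exact (hA.dotProduct_mulVec_zero_iff (vecz z)).mp hpair
    · -- h2 : ker A ⊆ D̃
      intro w hw
      set z : Matrix (Fin m) (Fin n) ℂ := Matrix.of fun i k => w (k, i) with hzdef
      have hvz : vecz z = w := rfl
      have hpair : matPairing A (fun X => zᴴ * X * z) = 0 := by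
        rw [matPairing_kraus, hvz, hw, dotProduct_zero]
      have hmem : (fun X => zᴴ * X * z) ∈ {φ ∈ decMaps m n | matPairing A φ = 0} :=
        ⟨hmemCP z, hpair⟩
      rw [hdual] at hmem
      have hmem2 : (fun X => zᴴ * X * z) ∈ convJoin (PhiCP D) (PhiCoCP E) ∩ CPmaps m n :=
        ⟨hmem, ⟨1, fun _ => z, fun X => by simp⟩⟩
      rw [hcapCP] at hmem2
      obtain ⟨N, V, hVD, hV⟩ := hmem2
      refine ⟨z, ?_, hvz⟩
      refine mem_of_choi D z V hVD fun p q => ?_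
      have h1 := hV (Matrix.single p.2 q.2 (1:ℂ))
      have h2 := congrFun (congrFun h1 p.1) q.1
      simpa [Matrix.sum_apply, stdmul_apply, vecz] using h2
  · refine range_eq_orth (ptr A) hAτ E ?_ ?_
    · intro z hz
      have hmem : (fun X => zᴴ * Xᵀ * z) ∈ convJoin (PhiCP D) (PhiCoCP E) :=
        ⟨_, ⟨0, fun _ => 0, fun i => i.elim0, fun X => rfl⟩,
         _, ⟨1, fun _ => z, fun _ => hz, fun X => rfl⟩, (hφCoCP z).symm⟩
      rw [← hdual] at hmem
      have hpair : matPairing A (fun X => zᴴ * Xᵀ * z) = 0 := hmem.2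
      rw [matPairing_kraus'] at hpair
      exact (hAτ.dotProduct_mulVec_zero_iff (vecz z)).mp hpair
    · intro w hw
      set z : Matrix (Fin m) (Fin n) ℂ := Matrix.of fun i k => w (k, i) with hzdef
      have hvz : vecz z = w := rfl
      have hpair : matPairing A (fun X => zᴴ * Xᵀ * z) = 0 := by
        rw [matPairing_kraus', hvz, hw, dotProduct_zero]
      have hmem : (fun X => zᴴ * Xᵀ * z) ∈ {φ ∈ decMaps m n | matPairing A φ = 0} :=
        ⟨hmemCoCP z, hpair⟩
      rw [hdual] at hmem
      have hmem2 : (fun X => zᴴ * Xᵀ * z) ∈ convJoin (PhiCP D) (PhiCoCP E) ∩ coCPmaps m n :=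
        ⟨hmem, ⟨1, fun _ => z, fun X => by simp⟩⟩
      rw [hcapCoCP] at hmem2
      obtain ⟨N, V, hVE, hV⟩ := hmem2
      refine ⟨z, ?_, hvz⟩
      refine mem_of_choi E z V hVE fun p q => ?_
      have h1 := hV (Matrix.single p.2 q.2 (1:ℂ))ᵀ
      rw [Matrix.transpose_transpose] at h1
      have h2 := congrFun (congrFun h1 p.1) q.1
      simpa [Matrix.sum_apply, std_transpose, stdmul_apply, vecz] using h2
end
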